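/- Fix states c, c¹, c² ∈ Δ_M and positive constants A, B₁, B₂ with A·c(m) = B₁·c¹(m) + B₂·c²(m) for all types m. Then the greedy value iterates with zero initialization satisfy A·V^t_greedy(c) ≤ B₁·V^t_greedy(c¹) + B₂·V^t_greedy(c²) for every t ≥ 0 (convexity of the value function over the belief simplex). -/

import Mathlib

open Finset

/-- Bayesian posterior belief after item `ℓ` is chosen from displayed set `w`. -/
noncomputable def post {M L : Type*} [Fintype M] (p : L → M → Finset L → ℝ)
    (c : M → ℝ) (ℓ : L) (w : Finset L) : M → ℝ :=
  fun m' => p ℓ m' w * c m' / (∑ m, p ℓ m w * c m)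

/-- The Q-function associated to a value function `V`. -/
noncomputable def Qfun {M L : Type*} [Fintype M] [Fintype L] (p : L → M → Finset L → ℝ)
    (γ : ℝ) (V : (M → ℝ) → ℝ) (w : Finset L) (c : M → ℝ) : ℝ :=
  ∑ m, ∑ ℓ, c m * p ℓ m w * (1 + γ * V (post p c ℓ w))

/-- Greedy value iteration: `V⁰ = 0` and `Vᵗ(c) = max_{w ∈ G} Q_{Vᵗ⁻¹}(w, c)`. -/
noncomputable def Vg {M L : Type*} [Fintype M] [Fintype L] (p : L → M → Finset L → ℝ)
    (γ : ℝ) (G : Finset (Finset L)) (hG : G.Nonempty) : ℕ → (M → ℝ) → ℝ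
  | 0 => fun _ => 0
  | t + 1 => fun c => G.sup' hG (fun w => Qfun p γ (Vg p γ G hG t) w c)

/-- Convexity of the greedy value iterates over the belief simplex:
if `A c = B₁ c¹ + B₂ c²` componentwise then `A Vᵗ(c) ≤ B₁ Vᵗ(c¹) + B₂ Vᵗ(c²)`. -/
theorem greedy_value_convex {M L : Type*} [Fintype M] [Fintype L]
    (p : L → M → Finset L → ℝ) (γ : ℝ) (hγ : 0 ≤ γ)
    (G : Finset (Finset L)) (hG : G.Nonempty)
    (hp : ∀ (ℓ : L) (m : M) (w : Finset L), 0 ≤ p ℓ m w ∧ p ℓ m w ≤ 1)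
    (c c₁ c₂ : M → ℝ)
    (hc : (∀ m, 0 ≤ c m) ∧ ∑ m, c m = 1)
    (hc₁ : (∀ m, 0 ≤ c₁ m) ∧ ∑ m, c₁ m = 1)
    (hc₂ : (∀ m, 0 ≤ c₂ m) ∧ ∑ m, c₂ m = 1)
    (A B₁ B₂ : ℝ) (hA : 0 < A) (hB₁ : 0 < B₁) (hB₂ : 0 < B₂)
    (hAB : ∀ m, A * c m = B₁ * c₁ m + B₂ * c₂ m) (t : ℕ) :
    A * Vg p γ G hG t c ≤ B₁ * Vg p γ G hG t c₁ + B₂ * Vg p γ G hG t c₂ := by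
  induction t generalizing c c₁ c₂ A B₁ B₂ with
  | zero => simp [Vg]
  | succ t ih =>
    set V := Vg p γ G hG t with hV
    -- rewrite Q as a sum over ℓ
    have hQform : ∀ d : M → ℝ, ∀ w : Finset L, Qfun p γ V w d =
        ∑ ℓ, (∑ m, p ℓ m w * d m) * (1 + γ * V (post p d ℓ w)) := by
      intro d w
      rw [Qfun, Finset.sum_comm]
      refine Finset.sum_congr rfl fun ℓ _ => ?_
      rw [Finset.sum_mul]
      exact Finset.sum_congr rfl fun m _ => by ring
    -- per-action convexity of Q
    have hQ : ∀ w : Finset L, A * Qfun p γ V w c ≤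
        B₁ * Qfun p γ V w c₁ + B₂ * Qfun p γ V w c₂ := by
      intro w
      rw [hQform c w, hQform c₁ w, hQform c₂ w, Finset.mul_sum, Finset.mul_sum,
        Finset.mul_sum, ← Finset.sum_add_distrib]
      refine Finset.sum_le_sum fun ℓ _ => ?_
      set S : ℝ := ∑ m, p ℓ m w * c m with hSdef
      set S₁ : ℝ := ∑ m, p ℓ m w * c₁ m with hS₁def
      set S₂ : ℝ := ∑ m, p ℓ m w * c₂ m with hS₂def
      have hSnn : 0 ≤ S :=
        Finset.sum_nonneg fun m _ => mul_nonneg (hp ℓ m w).1 (hc.1 m)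
      have hS₁nn : 0 ≤ S₁ :=
        Finset.sum_nonneg fun m _ => mul_nonneg (hp ℓ m w).1 (hc₁.1 m)
      have hS₂nn : 0 ≤ S₂ :=
        Finset.sum_nonneg fun m _ => mul_nonneg (hp ℓ m w).1 (hc₂.1 m)
      have hS : A * S = B₁ * S₁ + B₂ * S₂ := by
        rw [hSdef, hS₁def, hS₂def, Finset.mul_sum, Finset.mul_sum, Finset.mul_sum,
          ← Finset.sum_add_distrib]
        refine Finset.sum_congr rfl fun m _ => ?_
        linear_combination p ℓ m w * hAB m
      -- key inequality on the value terms
      have key : A * S * V (post p c ℓ w) ≤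
          B₁ * S₁ * V (post p c₁ ℓ w) + B₂ * S₂ * V (post p c₂ ℓ w) := by
        rcases eq_or_lt_of_le hSnn with hS0 | hSpos
        · -- S = 0 forces S₁ = S₂ = 0
          have h1 : S₁ = 0 := by nlinarith
          have h2 : S₂ = 0 := by nlinarith
          rw [← hS0, h1, h2]; ring_nf; simp
        · rcases eq_or_lt_of_le hS₁nn with hS10 | hS1pos
          · -- S₁ = 0 : posterior of c equals posterior of c₂
            have hterm : ∀ m, p ℓ m w * c₁ m = 0 := by
              intro m
              have := (Finset.sum_eq_zero_iff_of_nonneg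
                (fun m _ => mul_nonneg (hp ℓ m w).1 (hc₁.1 m))).mp hS10.symm
              exact this m (Finset.mem_univ m)
            have hAS : A * S = B₂ * S₂ := by rw [hS, ← hS10]; ring
            have hS2pos : 0 < S₂ := by nlinarith
            have hd : post p c ℓ w = post p c₂ ℓ w := by
              funext m
              show p ℓ m w * c m / S = p ℓ m w * c₂ m / S₂
              rw [div_eq_div_iff hSpos.ne' hS2pos.ne']
              have h1 : A * (p ℓ m w * c m) = B₂ * (p ℓ m w * c₂ m) := by
                linear_combination p ℓ m w * hAB m + B₁ * hterm m
              refine mul_left_cancel₀ hA.ne' ?_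
              linear_combination S₂ * h1 - p ℓ m w * c₂ m * hAS
            rw [hd, hAS, ← hS10]; ring_nf; exact le_refl _
          · rcases eq_or_lt_of_le hS₂nn with hS20 | hS2pos
            · -- S₂ = 0 : posterior of c equals posterior of c₁
              have hterm : ∀ m, p ℓ m w * c₂ m = 0 := by
                intro m
                have := (Finset.sum_eq_zero_iff_of_nonneg
                  (fun m _ => mul_nonneg (hp ℓ m w).1 (hc₂.1 m))).mp hS20.symm
                exact this m (Finset.mem_univ m)
              have hAS : A * S = B₁ * S₁ := by rw [hS, ← hS20]; ring
              have hd : post p c ℓ w = post p c₁ ℓ w := by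
                funext m
                show p ℓ m w * c m / S = p ℓ m w * c₁ m / S₁
                rw [div_eq_div_iff hSpos.ne' hS1pos.ne']
                have h1 : A * (p ℓ m w * c m) = B₁ * (p ℓ m w * c₁ m) := by
                  linear_combination p ℓ m w * hAB m + B₂ * hterm m
                refine mul_left_cancel₀ hA.ne' ?_
                linear_combination S₁ * h1 - p ℓ m w * c₁ m * hAS
              rw [hd, hAS, ← hS20]; ring_nf; exact le_refl _
            · -- both positive: apply the inductive hypothesis
              have hpost : ∀ (d : M → ℝ) (hd : ∀ m, 0 ≤ d m)
                  (Sd : ℝ) (hSd : Sd = ∑ m, p ℓ m w * d m) (hSdpos : 0 < Sd),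
                  (∀ m, 0 ≤ post p d ℓ w m) ∧ ∑ m, post p d ℓ w m = 1 := by
                intro d hd Sd hSd hSdpos
                constructor
                · intro m
                  exact div_nonneg (mul_nonneg (hp ℓ m w).1 (hd m)) (hSd ▸ hSdpos.le)
                · show ∑ m, p ℓ m w * d m / (∑ m', p ℓ m' w * d m') = 1
                  rw [← Finset.sum_div, div_self (by rw [← hSd]; exact hSdpos.ne')]
              have hid : ∀ m, A * S * post p c ℓ w m =
                  B₁ * S₁ * post p c₁ ℓ w m + B₂ * S₂ * post p c₂ ℓ w m := by
                intro m
                show A * S * (p ℓ m w * c m / S) =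
                  B₁ * S₁ * (p ℓ m w * c₁ m / S₁) + B₂ * S₂ * (p ℓ m w * c₂ m / S₂)
                field_simp
                linear_combination (p ℓ m w) * hAB m
              exact ih (post p c ℓ w) (post p c₁ ℓ w) (post p c₂ ℓ w)
                (hpost c hc.1 S hSdef hSpos) (hpost c₁ hc₁.1 S₁ hS₁def hS1pos)
                (hpost c₂ hc₂.1 S₂ hS₂def hS2pos)
                (A * S) (B₁ * S₁) (B₂ * S₂)
                (mul_pos hA hSpos) (mul_pos hB₁ hS1pos) (mul_pos hB₂ hS2pos) hid
      nlinarith [key, hS, mul_le_mul_of_nonneg_left key hγ]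
    -- combine over the sup'
    obtain ⟨w, hw, hweq⟩ :=
      Finset.exists_mem_eq_sup' hG (fun w => Qfun p γ V w c)
    have h1 : Qfun p γ V w c₁ ≤ Vg p γ G hG (t + 1) c₁ :=
      Finset.le_sup' (fun w => Qfun p γ V w c₁) hw
    have h2 : Qfun p γ V w c₂ ≤ Vg p γ G hG (t + 1) c₂ :=
      Finset.le_sup' (fun w => Qfun p γ V w c₂) hw
    have hVc : Vg p γ G hG (t + 1) c = Qfun p γ V w c := hweq
    rw [hVc]
    have := hQ w
    nlinarith [hQ w, mul_le_mul_of_nonneg_left h1 hB₁.le,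
      mul_le_mul_of_nonneg_left h2 hB₂.le]
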